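/- Assume non(𝒩) = 𝔠, where 𝒩 is the ideal of Lebesgue null subsets of [0,1]. Let {x_β : β < 𝔠} enumerate [0,½] without repetition and let 𝔉 ⊆ (½,1] be a measure-zero Cantor set. Fix a nonempty Lebesgue null set V ⊆ 𝔉 and define, for β < 𝔠, f_β = χ_{V ∪ {x_γ : γ ≤ β}}. Then (f_β)_{β<𝔠} is a 𝔠-sequence of measurable functions on [0,1] such that 0 ≤ f_ξ ≤ f_β a.e. whenever ξ ≤ β, the sequence converges pointwise everywhere to the integrable function χ_{V ∪ [0,½]}, but lim_{β<𝔠} ∫_{[0,1]} f_β dλ = 0 ≠ ½ = ∫_{[0,1]} χ_{V ∪ [0,½]} dλ; that is, the Monotone Convergence Theorem fails for this 𝔠-sequence. -/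

import Mathlib

open MeasureTheory Cardinal Ordinal

/-- `non(𝒩)`: the least cardinality of a non-null subset of `[0,1]`. -/
noncomputable def nonNull : Cardinal :=
  sInf {c : Cardinal | ∃ S : Set ℝ, S ⊆ Set.Icc 0 1 ∧ volume S ≠ 0 ∧ #S = c}

/-- Under `nonNull = 𝔠`, every subset of `[0,1]` of cardinality `< 𝔠` is null. -/
lemma null_of_small (hnon : nonNull = Cardinal.continuum) {S : Set ℝ}
    (hS : S ⊆ Set.Icc 0 1) (hc : #S < Cardinal.continuum) : volume S = 0 := by
  by_contra h
  have hle : nonNull ≤ #S := csInf_le' ⟨S, hS, h, rfl⟩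
  rw [hnon] at hle
  exact absurd hle (not_le.2 hc)

universe u

/-- The image of an initial segment `Iic β`, `β < ord 𝔠`, has cardinality `< 𝔠`. -/
lemma mk_image_Iic_lt {x : Ordinal.{u} → ℝ} {β : Ordinal.{u}}
    (hβ : β < Cardinal.continuum.ord) : #(x '' Set.Iic β) < Cardinal.continuum := by
  have h1 : Cardinal.lift.{u+1} #(x '' Set.Iic β) ≤ #(Set.Iic β) := by
    simpa using Cardinal.mk_image_le_lift (f := x) (s := Set.Iic β)
  have h2 : #(Set.Iic β) ≤ Cardinal.lift.{u+1} (β + 1).card :=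
    calc #(Set.Iic β) ≤ #(Set.Iio (β + 1)) := Cardinal.mk_le_mk_of_subset
          (fun γ (hγ : γ ≤ β) => (Order.lt_add_one_iff.mpr hγ : γ < β + 1))
      _ = Cardinal.lift.{u+1} (β + 1).card := Ordinal.mk_Iio_ordinal _
  have hlim := Cardinal.isSuccLimit_ord Cardinal.aleph0_le_continuum
  have h3 : (β + 1).card < Cardinal.continuum := Cardinal.lt_ord.mp
    (hlim.add_one_lt hβ)
  have h4 : Cardinal.lift.{u+1} #(x '' Set.Iic β) < Cardinal.continuum :=
    lt_of_le_of_lt (h1.trans h2) (Cardinal.lift_lt_continuum.mpr h3)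
  exact Cardinal.lift_lt_continuum.mp h4

theorem stmt_9 (hnon : nonNull = Cardinal.continuum)
    (x : Ordinal → ℝ)
    (hmem : ∀ α < Cardinal.continuum.ord, x α ∈ Set.Icc (0:ℝ) (1/2))
    (hinj : ∀ α β, α < Cardinal.continuum.ord → β < Cardinal.continuum.ord →
      x α = x β → α = β)
    (hsurj : ∀ y ∈ Set.Icc (0:ℝ) (1/2), ∃ α < Cardinal.continuum.ord, x α = y)
    (𝔉 : Set ℝ) (h𝔉 : 𝔉 ⊆ Set.Ioc (1/2 : ℝ) 1) (h𝔉c : IsCompact 𝔉)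
    (h𝔉p : Perfect 𝔉) (h𝔉0 : volume 𝔉 = 0)
    (V : Set ℝ) (hV𝔉 : V ⊆ 𝔉) (hVne : V.Nonempty) (hV0 : volume V = 0) :
    (∀ β < Cardinal.continuum.ord,
      AEMeasurable
        (Set.indicator (V ∪ x '' {γ | γ ≤ β}) (fun _ => (1:ℝ)))
        (volume : Measure ℝ)) ∧
    (∀ ξ β, ξ ≤ β → β < Cardinal.continuum.ord →
      ∀ᵐ t ∂(volume : Measure ℝ),
        0 ≤ Set.indicator (V ∪ x '' {γ | γ ≤ ξ}) (fun _ => (1:ℝ)) t ∧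
        Set.indicator (V ∪ x '' {γ | γ ≤ ξ}) (fun _ => (1:ℝ)) t ≤
          Set.indicator (V ∪ x '' {γ | γ ≤ β}) (fun _ => (1:ℝ)) t) ∧
    (∀ t ∈ Set.Icc (0:ℝ) 1, ∀ ε > (0:ℝ), ∃ β₀ < Cardinal.continuum.ord,
      ∀ β, β₀ < β → β < Cardinal.continuum.ord →
        |Set.indicator (V ∪ x '' {γ | γ ≤ β}) (fun _ => (1:ℝ)) t -
          Set.indicator (V ∪ Set.Icc (0:ℝ) (1/2)) (fun _ => (1:ℝ)) t| < ε) ∧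
    IntegrableOn (Set.indicator (V ∪ Set.Icc (0:ℝ) (1/2)) (fun _ => (1:ℝ)))
      (Set.Icc (0:ℝ) 1) volume ∧
    (∀ β < Cardinal.continuum.ord,
      ∫ t in Set.Icc (0:ℝ) 1,
        Set.indicator (V ∪ x '' {γ | γ ≤ β}) (fun _ => (1:ℝ)) t = 0) ∧
    (∫ t in Set.Icc (0:ℝ) 1,
        Set.indicator (V ∪ Set.Icc (0:ℝ) (1/2)) (fun _ => (1:ℝ)) t = 1/2) := by
  -- each set `V ∪ x '' Iic β` is null
  have hnull : ∀ β < Cardinal.continuum.ord, volume (V ∪ x '' {γ | γ ≤ β}) = 0 := by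
    intro β hβ
    have himgsub : x '' {γ | γ ≤ β} ⊆ Set.Icc (0:ℝ) 1 := by
      rintro _ ⟨γ, hγ, rfl⟩
      exact Set.Icc_subset_Icc_right (by norm_num) (hmem γ (lt_of_le_of_lt hγ hβ))
    have himg0 : volume (x '' {γ | γ ≤ β}) = 0 :=
      null_of_small hnon himgsub (mk_image_Iic_lt hβ)
    exact measure_union_null hV0 himg0
  -- hence the indicator functions are a.e. zero
  have haezero : ∀ β < Cardinal.continuum.ord,
      (Set.indicator (V ∪ x '' {γ | γ ≤ β}) (fun _ => (1:ℝ)))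
        =ᵐ[(volume : Measure ℝ)] 0 := by
    intro β hβ
    filter_upwards [measure_eq_zero_iff_ae_notMem.mp (hnull β hβ)] with t ht
    simp [Set.indicator_of_notMem ht]
  -- a.e. congruence for the limit function
  have hcong : (Set.indicator (V ∪ Set.Icc (0:ℝ) (1/2)) (fun _ => (1:ℝ)))
      =ᵐ[(volume : Measure ℝ)] Set.indicator (Set.Icc (0:ℝ) (1/2)) (fun _ => (1:ℝ)) := by
    filter_upwards [measure_eq_zero_iff_ae_notMem.mp hV0] with t ht
    by_cases h : t ∈ Set.Icc (0:ℝ) (1/2)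
    · rw [Set.indicator_of_mem (Set.mem_union_right _ h), Set.indicator_of_mem h]
    · have h' : t ∉ V ∪ Set.Icc (0:ℝ) (1/2) := by
        rintro (h'' | h'') <;> [exact ht h''; exact h h'']
      rw [Set.indicator_of_notMem h', Set.indicator_of_notMem h]
  refine ⟨?_, ?_, ?_, ?_, ?_, ?_⟩
  · -- AEMeasurable
    intro β hβ
    exact (aemeasurable_congr (haezero β hβ)).mpr aemeasurable_const
  · -- monotonicity (in fact everywhere)
    intro ξ β hξβ _
    refine Filter.Eventually.of_forall fun t => ⟨?_, ?_⟩
    · exact Set.indicator_nonneg (fun _ _ => zero_le_one) t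
    · refine Set.indicator_le_indicator_of_subset ?_ (fun _ => zero_le_one) t
      exact Set.union_subset_union_right _ (Set.image_mono fun γ hγ => le_trans hγ hξβ)
  · -- pointwise convergence
    intro t _ ε hε
    have hordpos : (0 : Ordinal) < Cardinal.continuum.ord :=
      (Cardinal.isSuccLimit_ord Cardinal.aleph0_le_continuum).bot_lt
    by_cases htI : t ∈ Set.Icc (0:ℝ) (1/2)
    · obtain ⟨α, hα, hxα⟩ := hsurj t htI
      refine ⟨α, hα, fun β hαβ hβ => ?_⟩
      have ht1 : t ∈ V ∪ x '' {γ | γ ≤ β} :=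
        Set.mem_union_right _ ⟨α, le_of_lt hαβ, hxα⟩
      have ht2 : t ∈ V ∪ Set.Icc (0:ℝ) (1/2) := Set.mem_union_right _ htI
      rw [Set.indicator_of_mem ht1, Set.indicator_of_mem ht2]
      simpa using hε
    · by_cases htV : t ∈ V
      · refine ⟨0, hordpos, fun β _ _ => ?_⟩
        rw [Set.indicator_of_mem (Set.mem_union_left _ htV : t ∈ V ∪ x '' {γ | γ ≤ β}),
          Set.indicator_of_mem (Set.mem_union_left _ htV : t ∈ V ∪ Set.Icc (0:ℝ) (1/2))]
        simpa using hε
      · refine ⟨0, hordpos, fun β _ hβ => ?_⟩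
        have ht1 : t ∉ V ∪ x '' {γ | γ ≤ β} := by
          rintro (h | ⟨γ, hγ, rfl⟩)
          · exact htV h
          · exact htI (hmem γ (lt_of_le_of_lt hγ hβ))
        have ht2 : t ∉ V ∪ Set.Icc (0:ℝ) (1/2) := by
          rintro (h | h)
          · exact htV h
          · exact htI h
        rw [Set.indicator_of_notMem ht1, Set.indicator_of_notMem ht2]
        simpa using hε
  · -- integrability of the limit
    refine (integrable_congr (ae_restrict_of_ae hcong)).mpr ?_
    refine (integrable_indicator_iff measurableSet_Icc).mpr ?_
    exact (integrableOn_const_iff).mpr (Or.inr (by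
      rw [Measure.restrict_apply measurableSet_Icc]
      exact lt_of_le_of_lt (measure_mono Set.inter_subset_left) (by simp)))
  · -- integrals of the sequence are 0
    intro β hβ
    rw [integral_congr_ae (ae_restrict_of_ae (haezero β hβ))]
    simp
  · -- integral of the limit is 1/2
    rw [integral_congr_ae (ae_restrict_of_ae hcong),
      setIntegral_indicator measurableSet_Icc]
    have hI : Set.Icc (0:ℝ) 1 ∩ Set.Icc (0:ℝ) (1/2) = Set.Icc (0:ℝ) (1/2) := by
      rw [Set.inter_eq_right]; exact Set.Icc_subset_Icc_right (by norm_num)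
    rw [hI]
    simp [Real.volume_Icc]
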